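/- Let 𝒞 be a finite family of finite sets that is laminar (any two members are disjoint or one contains the other), and let K ≤ |𝒞|. Then a subfamily of K inclusion-maximal members of 𝒞 with the K largest cardinalities maximizes |⋃ of the chosen sets| over all K-element subfamilies of 𝒞. -/

import Mathlib

open Finset

lemma sum_le_sum_of_forall_le' {β : Type*} {s t : Finset β} {f g : β → ℕ}
    (hc : s.card ≤ t.card) (hle : ∀ x ∈ s, ∀ y ∈ t, f x ≤ g y) :
    ∑ x ∈ s, f x ≤ ∑ y ∈ t, g y := by
  rcases s.eq_empty_or_nonempty with rfl | hs
  · simp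
  · have ht : t.Nonempty := Finset.card_pos.mp (lt_of_lt_of_le (Finset.card_pos.mpr hs) hc)
    obtain ⟨y₀, hy₀, hmin⟩ := t.exists_min_image g ht
    calc ∑ x ∈ s, f x ≤ ∑ _x ∈ s, g y₀ := Finset.sum_le_sum (fun x hx => hle x hx y₀ hy₀)
    _ = s.card * g y₀ := by simp [Finset.sum_const, smul_eq_mul]
    _ ≤ t.card * g y₀ := Nat.mul_le_mul_right _ hc
    _ = ∑ _y ∈ t, g y₀ := by simp [Finset.sum_const, smul_eq_mul]
    _ ≤ ∑ y ∈ t, g y := Finset.sum_le_sum (fun y hy => hmin y hy)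

/-- In a finite laminar family, choosing `K` inclusion-maximal members with the `K`
largest cardinalities maximizes the cardinality of the union over all `K`-element
subfamilies. -/
theorem stmt_13 {α : Type*} [DecidableEq α] (𝒞 : Finset (Finset α))
    (hlam : ∀ A ∈ 𝒞, ∀ B ∈ 𝒞, A ∩ B = ∅ ∨ A ⊆ B ∨ B ⊆ A)
    (K : ℕ) (hK : K ≤ 𝒞.card)
    (Chosen : Finset (Finset α)) (hsub : Chosen ⊆ 𝒞) (hcard : Chosen.card = K)
    (hmax : ∀ A ∈ Chosen, ∀ B ∈ 𝒞, ¬ A ⊂ B)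
    (hrank : ∀ A ∈ Chosen, ∀ B ∈ 𝒞, B ∉ Chosen → (∀ B' ∈ 𝒞, ¬ B ⊂ B') →
      B.card ≤ A.card) :
    ∀ T ⊆ 𝒞, T.card = K →
      (T.biUnion id).card ≤ (Chosen.biUnion id).card := by
  classical
  -- every member has a maximal member above it
  have hext : ∀ B ∈ 𝒞, ∃ m, m ∈ 𝒞 ∧ B ⊆ m ∧ ∀ B' ∈ 𝒞, ¬ m ⊂ B' := by
    intro B hB
    have hSne : (𝒞.filter (fun C => B ⊆ C)).Nonempty := ⟨B, by simp [hB]⟩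
    obtain ⟨m, hm, hmmax⟩ : ∃ m ∈ 𝒞.filter (fun C => B ⊆ C), ∀ x ∈ 𝒞.filter (fun C => B ⊆ C), ¬ m < x := by
      obtain ⟨m, hm⟩ := Finset.exists_maximal hSne
      exact ⟨m, hm.1, fun x hx hlt => lt_irrefl _ (lt_of_lt_of_le hlt (hm.2 hx hlt.le))⟩
    rw [Finset.mem_filter] at hm
    refine ⟨m, hm.1, hm.2, ?_⟩
    intro B' hB' hlt
    exact hmmax B' (Finset.mem_filter.mpr ⟨hB', hm.2.trans hlt.subset⟩) hlt
  -- pairwise disjointness of maximal members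
  have hdisj : ∀ A, (A ∈ 𝒞 ∧ ∀ B' ∈ 𝒞, ¬ A ⊂ B') →
      ∀ B, (B ∈ 𝒞 ∧ ∀ B' ∈ 𝒞, ¬ B ⊂ B') → A ≠ B → Disjoint A B := by
    intro A ⟨hA, hAm⟩ B ⟨hB, hBm⟩ hne
    rcases hlam A hA B hB with h | h | h
    · exact Finset.disjoint_iff_inter_eq_empty.mpr h
    · exact absurd (Finset.ssubset_iff_subset_ne.mpr ⟨h, hne⟩) (hAm B hB)
    · exact absurd (Finset.ssubset_iff_subset_ne.mpr ⟨h, hne.symm⟩) (hBm A hA)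
  intro T hT hTK
  -- choice function to a maximal member above
  set f : Finset α → Finset α := fun B =>
    if h : B ∈ 𝒞 then (hext B h).choose else ∅ with hf
  have hfspec : ∀ B ∈ 𝒞, f B ∈ 𝒞 ∧ B ⊆ f B ∧ ∀ B' ∈ 𝒞, ¬ f B ⊂ B' := by
    intro B hB
    simp only [hf, dif_pos hB]
    exact (hext B hB).choose_spec
  set M : Finset (Finset α) := T.image f with hM
  have hMsub : ∀ m ∈ M, m ∈ 𝒞 ∧ ∀ B' ∈ 𝒞, ¬ m ⊂ B' := by
    intro m hm
    obtain ⟨B, hB, rfl⟩ := Finset.mem_image.mp hm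
    obtain ⟨h1, _, h3⟩ := hfspec B (hT hB)
    exact ⟨h1, h3⟩
  have hMcard : M.card ≤ K := hTK ▸ Finset.card_image_le
  -- union of T is contained in union of M
  have hUsub : T.biUnion id ⊆ M.biUnion id := by
    intro x hx
    obtain ⟨B, hB, hxB⟩ := Finset.mem_biUnion.mp hx
    exact Finset.mem_biUnion.mpr ⟨f B, Finset.mem_image_of_mem f hB,
      (hfspec B (hT hB)).2.1 hxB⟩
  -- Chosen members are maximal
  have hCm : ∀ A ∈ Chosen, A ∈ 𝒞 ∧ ∀ B' ∈ 𝒞, ¬ A ⊂ B' := fun A hA =>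
    ⟨hsub hA, hmax A hA⟩
  -- card of unions as sums
  have hMcardU : (M.biUnion id).card = ∑ m ∈ M, m.card :=
    Finset.card_biUnion (fun A hA B hB hne => hdisj A (hMsub A hA) B (hMsub B hB) hne)
  have hCcardU : (Chosen.biUnion id).card = ∑ A ∈ Chosen, A.card :=
    Finset.card_biUnion (fun A hA B hB hne => hdisj A (hCm A hA) B (hCm B hB) hne)
  -- sum comparison
  have hdiffcard : (M \ Chosen).card ≤ (Chosen \ M).card := by
    have h1 : (M ∩ Chosen).card + (M \ Chosen).card = M.card :=
      Finset.card_inter_add_card_sdiff M Chosen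
    have h2 : (Chosen ∩ M).card + (Chosen \ M).card = Chosen.card :=
      Finset.card_inter_add_card_sdiff Chosen M
    have h3 : (M ∩ Chosen).card = (Chosen ∩ M).card := by rw [Finset.inter_comm]
    have : M.card ≤ Chosen.card := hcard ▸ hMcard
    omega
  have hsum : ∑ m ∈ M, m.card ≤ ∑ A ∈ Chosen, A.card := by
    have hsplitM : ∑ m ∈ M ∩ Chosen, m.card + ∑ m ∈ M \ Chosen, m.card = ∑ m ∈ M, m.card :=
      Finset.sum_inter_add_sum_sdiff M Chosen _
    have hsplitC : ∑ A ∈ Chosen ∩ M, A.card + ∑ A ∈ Chosen \ M, A.card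
        = ∑ A ∈ Chosen, A.card := Finset.sum_inter_add_sum_sdiff Chosen M _
    have heq : ∑ m ∈ M ∩ Chosen, m.card = ∑ A ∈ Chosen ∩ M, A.card := by
      rw [Finset.inter_comm]
    have hle : ∑ m ∈ M \ Chosen, m.card ≤ ∑ A ∈ Chosen \ M, A.card := by
      apply sum_le_sum_of_forall_le' hdiffcard
      intro x hx y hy
      rw [Finset.mem_sdiff] at hx hy
      obtain ⟨hx𝒞, hxmax⟩ := hMsub x hx.1
      exact hrank y (hy.1) x hx𝒞 hx.2 hxmax
    omega
  calc (T.biUnion id).card ≤ (M.biUnion id).card := Finset.card_le_card hUsub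
  _ = ∑ m ∈ M, m.card := hMcardU
  _ ≤ ∑ A ∈ Chosen, A.card := hsum
  _ = (Chosen.biUnion id).card := hCcardU.symm
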